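/- arXiv:2602.12096 — 2 statements merged into one kernel-verified Lean document; each statement's English description precedes it below -/
import Mathlib

section
/- Let s, t ∈ V, let P = (v₀, …, v_k) be a walk from s = v₀ to t = v_k whose cost equals the distance c* = d(s,t), and let h be a heuristic admissible for target t. Let CLOSED ⊆ V with s ∈ CLOSED and t ∉ CLOSED, and let g : V → ℝ≥0 satisfy g(s) = 0 and the relaxation condition g(v) ≤ g(u) + c(u,v) for every edge (u,v) with u ∈ CLOSED. Then the first vertex v on P that does not belong to CLOSED satisfies g(v) + h(v) ≤ c*; in particular, the infimum of g + h over V ∖ CLOSED is at most c*. -/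
open scoped NNReal ENNReal

/-- A walk of length `k` from `u` to `t` along edge relation `E`,
given by its sequence of vertices `v`. -/
def IsWalk {V : Type*} (E : V → V → Prop) (u t : V) (k : ℕ) (v : ℕ → V) : Prop :=
  v 0 = u ∧ v k = t ∧ ∀ i < k, E (v i) (v (i + 1))

/-- The cost of a walk of length `k` with vertex sequence `v`. -/
noncomputable def walkCost {V : Type*} (c : V → V → ℝ≥0) (k : ℕ) (v : ℕ → V) : ℝ≥0 :=
  ∑ i ∈ Finset.range k, c (v i) (v (i + 1))

/-- The distance from `u` to `t`: the infimum in `ℝ≥0∞` of costs of walks from `u` to `t`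
(equal to `⊤` if no walk exists). -/
noncomputable def graphDist {V : Type*} (E : V → V → Prop) (c : V → V → ℝ≥0) (u t : V) : ℝ≥0∞ :=
  sInf {x : ℝ≥0∞ | ∃ k v, IsWalk E u t k v ∧ x = (walkCost c k v : ℝ≥0∞)}

/-- A heuristic `h` is admissible for target `t` if it never overestimates
the distance to `t`. -/
def Admissible {V : Type*} (E : V → V → Prop) (c : V → V → ℝ≥0) (h : V → ℝ≥0) (t : V) : Prop :=
  ∀ x, (h x : ℝ≥0∞) ≤ graphDist E c x t

/-- A heuristic `h` is consistent if `h u ≤ c u v + h v` for every edge `(u, v)`. -/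
def Consistent {V : Type*} (E : V → V → Prop) (c : V → V → ℝ≥0) (h : V → ℝ≥0) : Prop :=
  ∀ u v, E u v → h u ≤ c u v + h v

/-- `t` is reachable from `u` if some walk from `u` to `t` exists. -/
def Reach {V : Type*} (E : V → V → Prop) (u t : V) : Prop :=
  ∃ k v, IsWalk E u t k v

/-- Open-frontier invariant: along an optimal walk, the first vertex outside `CLOSED`
has f-value at most `c*`; in particular the infimum of `g + h` over the frontier is
at most `c*`. -/
theorem stmt1 {V : Type*} [Fintype V] (E : V → V → Prop) (c : V → V → ℝ≥0)
    (s t : V) (k : ℕ) (v : ℕ → V) (h : V → ℝ≥0)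
    (hwalk : IsWalk E s t k v)
    (hopt : (walkCost c k v : ℝ≥0∞) = graphDist E c s t)
    (hadm : Admissible E c h t)
    (CLOSED : Set V) (hs : s ∈ CLOSED) (ht : t ∉ CLOSED)
    (g : V → ℝ≥0) (hg0 : g s = 0)
    (hrelax : ∀ x y, E x y → x ∈ CLOSED → g y ≤ g x + c x y) :
    (∃ i ≤ k, (∀ j < i, v j ∈ CLOSED) ∧ v i ∉ CLOSED ∧
        g (v i) + h (v i) ≤ walkCost c k v) ∧
      (⨅ x ∈ {x | x ∉ CLOSED}, ((g x : ℝ≥0∞) + h x)) ≤ (walkCost c k v : ℝ≥0∞) := by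
  
  obtain ⟨hv0, hvk, hE⟩ := hwalk
  have hex : ∃ i, v i ∉ CLOSED := ⟨k, by rwa [hvk]⟩
  classical
  set i := Nat.find hex with hi
  have hvi : v i ∉ CLOSED := Nat.find_spec hex
  have hbefore : ∀ j < i, v j ∈ CLOSED := fun j hj => by
    by_contra hc; exact absurd (Nat.find_le hc) (not_le.mpr hj)
  have hik : i ≤ k := Nat.find_le (by rwa [hvk])
  -- prefix bound
  have hpref : ∀ m ≤ i, g (v m) ≤ ∑ j ∈ Finset.range m, c (v j) (v (j + 1)) := by
    intro m hm
    induction m with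
    | zero => rw [hv0, hg0]; exact zero_le
    | succ n ih =>
      have hn : n < i := Nat.lt_of_succ_le hm
      have hEn : E (v n) (v (n + 1)) := hE n (lt_of_lt_of_le hn hik)
      calc g (v (n + 1)) ≤ g (v n) + c (v n) (v (n + 1)) :=
            hrelax _ _ hEn (hbefore n hn)
        _ ≤ (∑ j ∈ Finset.range n, c (v j) (v (j + 1))) + c (v n) (v (n + 1)) :=
            add_le_add_left (ih hn.le) _
        _ = ∑ j ∈ Finset.range (n + 1), c (v j) (v (j + 1)) :=
            (Finset.sum_range_succ _ n).symm
  -- suffix walk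
  have hsuf : IsWalk E (v i) t (k - i) (fun j => v (i + j)) := by
    refine ⟨rfl, ?_, fun j hj => ?_⟩
    · show v (i + (k - i)) = t
      rw [Nat.add_sub_cancel' hik]; exact hvk
    · have hlt : i + j < k := by omega
      show E (v (i + j)) (v (i + (j + 1)))
      rw [← Nat.add_assoc]
      exact hE (i + j) hlt
  have hdist : graphDist E c (v i) t ≤
      (walkCost c (k - i) (fun j => v (i + j)) : ℝ≥0∞) :=
    sInf_le ⟨k - i, _, hsuf, rfl⟩
  have hh : (h (v i) : ℝ≥0∞) ≤ (walkCost c (k - i) (fun j => v (i + j)) : ℝ≥0∞) :=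
    le_trans (hadm (v i)) hdist
  have hh' : h (v i) ≤ walkCost c (k - i) (fun j => v (i + j)) := by
    exact_mod_cast hh
  have hsplit : walkCost c k v =
      (∑ j ∈ Finset.range i, c (v j) (v (j + 1))) +
        walkCost c (k - i) (fun j => v (i + j)) := by
    unfold walkCost
    rw [← Finset.sum_range_add_sum_Ico _ hik]
    congr 1
    rw [Finset.sum_Ico_eq_sum_range]
    congr 1
  have hmain : g (v i) + h (v i) ≤ walkCost c k v := by
    rw [hsplit]
    exact add_le_add (hpref i le_rfl) hh'
  refine ⟨⟨i, hik, hbefore, hvi, hmain⟩, ?_⟩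
  calc (⨅ x ∈ {x | x ∉ CLOSED}, ((g x : ℝ≥0∞) + h x))
      ≤ (g (v i) : ℝ≥0∞) + h (v i) := biInf_le _ hvi
    _ ≤ (walkCost c k v : ℝ≥0∞) := by exact_mod_cast hmain
end

section
/- Let V be a finite type with an edge relation E : V → V → Prop, let s ∈ V, and let (Sₙ)ₙ be a sequence of subsets of V such that S₀ = {s} and for every n: if there exists an edge (u,v) with u ∈ Sₙ and v ∉ Sₙ, then Sₙ₊₁ = Sₙ ∪ {w} for some vertex w ∉ Sₙ admitting an edge (u,w) with u ∈ Sₙ; otherwise Sₙ₊₁ = Sₙ. Then for every n ≥ card V, the set Sₙ contains every vertex reachable from s; in particular, if some goal vertex t is reachable from s, then t ∈ Sₙ for all n ≥ card V. -/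
open scoped NNReal ENNReal

/-- Completeness of systematic expansion: a process that, whenever possible, adds a new
vertex adjacent to the explored set, contains every vertex reachable from `s` after at
most `card V` steps; in particular any reachable goal vertex. -/
theorem stmt6 {V : Type*} [Fintype V] (E : V → V → Prop)
    (s : V) (S : ℕ → Set V)
    (hS0 : S 0 = {s})
    (hgrow : ∀ n, (∃ u ∈ S n, ∃ x, E u x ∧ x ∉ S n) →
      ∃ w ∉ S n, (∃ u ∈ S n, E u w) ∧ S (n + 1) = insert w (S n))
    (hstall : ∀ n, (¬ ∃ u ∈ S n, ∃ x, E u x ∧ x ∉ S n) → S (n + 1) = S n) :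
    ∀ n, Fintype.card V ≤ n → ∀ t, Reach E s t → t ∈ S n := by

  classical
  -- monotonicity
  have hmono : ∀ n, S n ⊆ S (n + 1) := by
    intro n
    by_cases h : ∃ u ∈ S n, ∃ x, E u x ∧ x ∉ S n
    · obtain ⟨w, _, _, hw⟩ := hgrow n h
      rw [hw]; exact Set.subset_insert _ _
    · rw [hstall n h]
  have hmono' : ∀ m n, m ≤ n → S m ⊆ S n := by
    intro m n hmn
    induction n with
    | zero => simp_all
    | succ n ih =>
      rcases Nat.lt_or_ge m (n+1) with h | h
      · exact (ih (Nat.lt_succ_iff.mp h)).trans (hmono n)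
      · have : m = n + 1 := le_antisymm hmn h
        subst this; rfl
  have hs : ∀ n, s ∈ S n := fun n =>
    hmono' 0 n (Nat.zero_le _) (by rw [hS0]; rfl)
  -- either closed or grows
  have key : ∀ n, (¬ ∃ u ∈ S n, ∃ x, E u x ∧ x ∉ S n) ∨ n + 1 ≤ (S n).ncard := by
    intro n
    induction n with
    | zero => right; rw [hS0]; simp
    | succ n ih =>
      by_cases h : ∃ u ∈ S n, ∃ x, E u x ∧ x ∉ S n
      · right
        obtain ⟨w, hw, _, hSn⟩ := hgrow n h
        have hfin : (S n).Finite := Set.toFinite _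
        rw [hSn, Set.ncard_insert_of_notMem hw hfin]
        rcases ih with ih | ih
        · exact absurd h ih
        · omega
      · left; rw [hstall n h]; exact h
  have hclosed : ∀ n, Fintype.card V ≤ n → ¬ ∃ u ∈ S n, ∃ x, E u x ∧ x ∉ S n := by
    intro n hn
    rcases key n with h | h
    · exact h
    · exfalso
      have hle : (S n).ncard ≤ Fintype.card V :=
        le_trans (Set.ncard_le_ncard (Set.subset_univ (S n)) (Set.toFinite _)) (by simp [Set.ncard_univ])
      omega
  intro n hn t ht
  obtain ⟨k, v, hv0, hvk, hvE⟩ := ht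
  have : ∀ i ≤ k, v i ∈ S n := by
    intro i hi
    induction i with
    | zero => rw [hv0]; exact hs n
    | succ i ih =>
      have hvi : v i ∈ S n := ih (Nat.le_of_succ_le hi)
      by_contra hvs
      exact hclosed n hn ⟨v i, hvi, v (i+1), hvE i (Nat.lt_of_succ_le hi), hvs⟩
  rw [← hvk]; exact this k le_rfl
end
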